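/- Let S, T, C ∈ L†(D,H) satisfy the weak commutation relation [S,T] = C, i.e. ⟨Tξ, S†η⟩ − ⟨Sξ, T†η⟩ = ⟨Cξ, η⟩ for all ξ, η ∈ D, and assume in addition that [S†,T] − [S,T†] = 0 in weak sense, i.e. ⟨Tξ, Sη⟩ − ⟨S†ξ, T†η⟩ = ⟨T†ξ, S†η⟩ − ⟨Sξ, Tη⟩ for all ξ, η ∈ D. Then for every φ ∈ D with ‖φ‖ = 1: ((ΔS)_φ + (ΔS†)_φ)·((ΔT)_φ + (ΔT†)_φ) ≥ |Re⟨φ, Cφ⟩|. -/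

import Mathlib

open ComplexConjugate


/-- The uncertainty (ΔA)_φ = (‖Aφ‖² − |⟨Aφ, φ⟩|²)^{1/2} of an operator A ∈ L†(D,H) in the
state φ ∈ D. -/
noncomputable def uncertainty {H : Type*} [NormedAddCommGroup H] [InnerProductSpace ℂ H]
    {D : Submodule ℂ H} (A : D →ₗ[ℂ] H) (φ : D) : ℝ :=
  Real.sqrt (‖A φ‖ ^ 2 - (‖(inner ℂ (A φ) (φ : H) : ℂ)‖) ^ 2)

lemma uncertainty_eq_norm {H : Type*} [NormedAddCommGroup H] [InnerProductSpace ℂ H]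
    {D : Submodule ℂ H} (A : D →ₗ[ℂ] H) (φ : D) (hφ : ‖(φ : H)‖ = 1) :
    uncertainty A φ = ‖A φ - (inner ℂ ((φ : H)) (A φ) : ℂ) • (φ : H)‖ := by
  set c : ℂ := inner ℂ ((φ : H)) (A φ) with hc
  have habs : ‖(inner ℂ (A φ) (φ : H) : ℂ)‖ = ‖c‖ := by
    rw [← inner_conj_symm (A φ) ((φ : H))]
    exact Complex.norm_conj _
  have hsq : ‖A φ - c • (φ : H)‖ ^ 2 = ‖A φ‖ ^ 2 - ‖c‖ ^ 2 := by
    have h1 := norm_sub_sq (𝕜 := ℂ) (A φ) (c • (φ : H))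
    have h2 : (inner ℂ (A φ) (c • (φ : H)) : ℂ) = c * conj c := by
      rw [inner_smul_right, ← inner_conj_symm (A φ) ((φ : H))]
    have h3 : ‖c • (φ : H)‖ = ‖c‖ := by
      rw [norm_smul, hφ, mul_one]
    have h4 : (c * conj c).re = ‖c‖ ^ 2 := by
      rw [Complex.mul_conj]; rw [Complex.sq_norm]; simp
    rw [h2, h3] at h1
    simp only [RCLike.re_to_complex] at h1
    rw [h1, h4]
    ring
  rw [uncertainty, habs, ← hsq, Real.sqrt_sq (norm_nonneg _)]

theorem uncertainty_relation_UR2_general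
    {H : Type*} [NormedAddCommGroup H] [InnerProductSpace ℂ H]
    (D : Submodule ℂ H) (hD : Dense (D : Set H))
    (S Sd T Td C Cd : D →ₗ[ℂ] H)
    (hS : ∀ ξ η : D, (inner ℂ (S ξ) (η : H) : ℂ) = inner ℂ (ξ : H) (Sd η))
    (hT : ∀ ξ η : D, (inner ℂ (T ξ) (η : H) : ℂ) = inner ℂ (ξ : H) (Td η))
    (hC : ∀ ξ η : D, (inner ℂ (C ξ) (η : H) : ℂ) = inner ℂ (ξ : H) (Cd η))
    -- weak commutation relation [S,T] = C
    (hCR : ∀ ξ η : D,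
      (inner ℂ (T ξ) (Sd η) : ℂ) - (inner ℂ (S ξ) (Td η) : ℂ) = (inner ℂ (C ξ) (η : H) : ℂ))
    -- [S†,T] − [S,T†] = 0 in weak sense
    (hsym : ∀ ξ η : D,
      (inner ℂ (T ξ) (S η) : ℂ) - (inner ℂ (Sd ξ) (Td η) : ℂ)
        = (inner ℂ (Td ξ) (Sd η) : ℂ) - (inner ℂ (S ξ) (T η) : ℂ)) :
    ∀ φ : D, ‖(φ : H)‖ = 1 →
      (uncertainty S φ + uncertainty Sd φ) * (uncertainty T φ + uncertainty Td φ)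
        ≥ |((inner ℂ ((φ : H)) (C φ) : ℂ)).re| := by
  intro φ hφ
  have hφ2 : (inner ℂ ((φ : H)) ((φ : H)) : ℂ) = 1 := by
    rw [inner_self_eq_norm_sq_to_K, hφ]; norm_num
  set a : ℂ := inner ℂ ((φ : H)) (S φ) with ha
  set b : ℂ := inner ℂ ((φ : H)) (T φ) with hb
  set a' : ℂ := inner ℂ ((φ : H)) (Sd φ) with ha'
  set b' : ℂ := inner ℂ ((φ : H)) (Td φ) with hb'
  have haa : a' = conj a := by
    rw [ha', ← hS φ φ, ← inner_conj_symm (S φ) ((φ : H)), ← ha]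
  have hbb : b' = conj b := by
    rw [hb', ← hT φ φ, ← inner_conj_symm (T φ) ((φ : H)), ← hb]
  set A : H := S φ - a • (φ : H) with hA
  set B : H := T φ - b • (φ : H) with hB
  set A' : H := Sd φ - a' • (φ : H) with hA'
  set B' : H := Td φ - b' • (φ : H) with hB'
  -- auxiliary inner products
  have hTφφ : (inner ℂ (T φ) ((φ : H)) : ℂ) = conj b := by
    rw [← inner_conj_symm (T φ) ((φ : H)), ← hb]
  have hSφφ : (inner ℂ (S φ) ((φ : H)) : ℂ) = conj a := by
    rw [← inner_conj_symm (S φ) ((φ : H)), ← ha]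
  have e1 : (inner ℂ B A' : ℂ) = inner ℂ (T φ) (Sd φ) - conj a * conj b := by
    rw [hB, hA', inner_sub_left, inner_sub_right, inner_sub_right,
      inner_smul_left, inner_smul_right, inner_smul_left, inner_smul_right,
      hφ2, hTφφ, ← ha', haa]
    ring
  have e2 : (inner ℂ A B' : ℂ) = inner ℂ (S φ) (Td φ) - conj a * conj b := by
    rw [hA, hB', inner_sub_left, inner_sub_right, inner_sub_right,
      inner_smul_left, inner_smul_right, inner_smul_left, inner_smul_right,
      hφ2, hSφφ, ← hb', hbb]
    ring
  have hkey : (inner ℂ B A' : ℂ) - inner ℂ A B' = inner ℂ (C φ) ((φ : H)) := by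
    rw [e1, e2, ← hCR φ φ]; ring
  have hre : ((inner ℂ ((φ : H)) (C φ) : ℂ)).re = ((inner ℂ B A' : ℂ) - inner ℂ A B').re := by
    rw [hkey, ← inner_conj_symm (C φ) ((φ : H))]
    exact (Complex.conj_re _).symm
  have hBA' : |((inner ℂ B A' : ℂ)).re| ≤ ‖B‖ * ‖A'‖ := by
    calc |((inner ℂ B A' : ℂ)).re| ≤ ‖inner ℂ B A'‖ := Complex.abs_re_le_norm _
      _ ≤ ‖B‖ * ‖A'‖ := by
        simpa using norm_inner_le_norm (𝕜 := ℂ) B A'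
  have hAB' : |((inner ℂ A B' : ℂ)).re| ≤ ‖A‖ * ‖B'‖ := by
    calc |((inner ℂ A B' : ℂ)).re| ≤ ‖inner ℂ A B'‖ := Complex.abs_re_le_norm _
      _ ≤ ‖A‖ * ‖B'‖ := by
        simpa using norm_inner_le_norm (𝕜 := ℂ) A B'
  have hbound : |((inner ℂ ((φ : H)) (C φ) : ℂ)).re| ≤ ‖B‖ * ‖A'‖ + ‖A‖ * ‖B'‖ := by
    rw [hre, Complex.sub_re]
    calc |((inner ℂ B A' : ℂ)).re - ((inner ℂ A B' : ℂ)).re|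
        ≤ |((inner ℂ B A' : ℂ)).re| + |((inner ℂ A B' : ℂ)).re| := abs_sub _ _
      _ ≤ ‖B‖ * ‖A'‖ + ‖A‖ * ‖B'‖ := add_le_add hBA' hAB'
  have uS : uncertainty S φ = ‖A‖ := uncertainty_eq_norm S φ hφ
  have uSd : uncertainty Sd φ = ‖A'‖ := uncertainty_eq_norm Sd φ hφ
  have uT : uncertainty T φ = ‖B‖ := uncertainty_eq_norm T φ hφ
  have uTd : uncertainty Td φ = ‖B'‖ := uncertainty_eq_norm Td φ hφ
  rw [ge_iff_le, uS, uSd, uT, uTd]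
  nlinarith [norm_nonneg A, norm_nonneg A', norm_nonneg B, norm_nonneg B',
    mul_nonneg (norm_nonneg A) (norm_nonneg B), mul_nonneg (norm_nonneg A') (norm_nonneg B')]
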